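/- Let s : ℕ → ℂ with s(0) = 1. Then s(n) = s(1)^n holds for every natural number n if and only if χ(λ,s) = 0 for every tuple λ of positive integers with len(λ) ≥ 2. -/

import Mathlib

open Finset

/-- `P` is a set partition of the finite set `s`. -/
def IsPartitionOf {α : Type*} [DecidableEq α] (s : Finset α) (P : Finset (Finset α)) : Prop :=
  ∅ ∉ P ∧ (∀ B ∈ P, B ⊆ s) ∧ ∀ a ∈ s, ∃! B, B ∈ P ∧ a ∈ B

open Classical in
noncomputable def partitionsOf {α : Type*} [DecidableEq α] (s : Finset α) :
    Finset (Finset (Finset α)) :=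
  s.powerset.powerset.filter (IsPartitionOf s)

/-- `χ(λ, s)` for a tuple `λ` of integers indexed by a finite set `I`:
`χ(λ,s) = ∑_σ (−1)^{|σ|−1}(|σ|−1)!·∏_{B∈σ} s(∑_{i∈B} λ_i)`,
where `σ` ranges over all set partitions of `I`. -/
noncomputable def chiFam {ι : Type*} [DecidableEq ι] (I : Finset ι) (lam : ι → ℕ)
    (s : ℕ → ℂ) : ℂ :=
  ∑ P ∈ partitionsOf I,
    (-1 : ℂ) ^ (P.card - 1) * ((P.card - 1).factorial : ℂ) * ∏ B ∈ P, s (∑ i ∈ B, lam i)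

section Aux

variable {ι : Type*} [DecidableEq ι]

lemma mem_partitionsOf {I : Finset ι} {P : Finset (Finset ι)} :
    P ∈ partitionsOf I ↔ IsPartitionOf I P := by
  classical
  constructor
  · intro h
    exact (Finset.mem_filter.mp h).2
  · intro h
    refine Finset.mem_filter.mpr ⟨?_, h⟩
    rw [Finset.mem_powerset]
    intro B hB
    exact Finset.mem_powerset.mpr (h.2.1 B hB)

lemma IsPartitionOf.disj {I : Finset ι} {P : Finset (Finset ι)} (h : IsPartitionOf I P)
    {B C : Finset ι} (hB : B ∈ P) (hC : C ∈ P) (hne : B ≠ C) : Disjoint B C := by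
  rw [Finset.disjoint_left]
  intro x hxB hxC
  obtain ⟨D, -, hun⟩ := h.2.2 x (h.2.1 B hB hxB)
  exact hne ((hun B ⟨hB, hxB⟩).trans (hun C ⟨hC, hxC⟩).symm)

lemma IsPartitionOf.biUnion_eq {I : Finset ι} {P : Finset (Finset ι)}
    (h : IsPartitionOf I P) : P.biUnion id = I := by
  ext x
  simp only [Finset.mem_biUnion, id]
  constructor
  · rintro ⟨B, hB, hx⟩
    exact h.2.1 B hB hx
  · intro hx
    obtain ⟨B, ⟨hB, hxB⟩, -⟩ := h.2.2 x hx
    exact ⟨B, hB, hxB⟩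

lemma IsPartitionOf.sum_card {I : Finset ι} {P : Finset (Finset ι)}
    (h : IsPartitionOf I P) : ∑ B ∈ P, B.card = I.card := by
  rw [← h.biUnion_eq]
  exact (Finset.card_biUnion (fun B hB C hC hne => h.disj hB hC hne)).symm

lemma insert_isPartition {I B : Finset ι} {Q : Finset (Finset ι)} {a : ι}
    (haB : a ∈ B) (hBI : B ⊆ I) (hQ : IsPartitionOf (I \ B) Q) :
    IsPartitionOf I (insert B Q) := by
  refine ⟨?_, ?_, ?_⟩
  · intro h
    rcases Finset.mem_insert.mp h with h | h
    · exact Finset.notMem_empty a (h ▸ haB)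
    · exact hQ.1 h
  · intro C hC
    rcases Finset.mem_insert.mp hC with rfl | h
    · exact hBI
    · exact (hQ.2.1 C h).trans (Finset.sdiff_subset)
  · intro x hx
    by_cases hxB : x ∈ B
    · refine ⟨B, ⟨Finset.mem_insert_self _ _, hxB⟩, ?_⟩
      rintro C ⟨hC, hxC⟩
      rcases Finset.mem_insert.mp hC with rfl | h
      · rfl
      · exact absurd (hQ.2.1 C h hxC) (by simp [hxB])
    · obtain ⟨C, ⟨hC, hxC⟩, hun⟩ := hQ.2.2 x (Finset.mem_sdiff.mpr ⟨hx, hxB⟩)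
      refine ⟨C, ⟨Finset.mem_insert_of_mem hC, hxC⟩, ?_⟩
      rintro D ⟨hD, hxD⟩
      rcases Finset.mem_insert.mp hD with rfl | h
      · exact absurd hxD hxB
      · exact hun D ⟨h, hxD⟩

lemma block_not_mem {I B : Finset ι} {Q : Finset (Finset ι)} {a : ι}
    (haB : a ∈ B) (hQ : IsPartitionOf (I \ B) Q) : B ∉ Q := by
  intro h
  have := hQ.2.1 B h haB
  simp only [Finset.mem_sdiff] at this
  exact this.2 haB

lemma erase_isPartition {I : Finset ι} {P : Finset (Finset ι)} (hP : IsPartitionOf I P)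
    {B : Finset ι} (hB : B ∈ P) : IsPartitionOf (I \ B) (P.erase B) := by
  refine ⟨fun h => hP.1 (Finset.mem_of_mem_erase h), ?_, ?_⟩
  · intro C hC
    have hCP := Finset.mem_of_mem_erase hC
    have hne : C ≠ B := Finset.ne_of_mem_erase hC
    refine Finset.subset_sdiff.mpr ⟨hP.2.1 C hCP, hP.disj hCP hB hne⟩
  · intro x hx
    obtain ⟨hxI, hxB⟩ := Finset.mem_sdiff.mp hx
    obtain ⟨C, ⟨hC, hxC⟩, hun⟩ := hP.2.2 x hxI
    have hne : C ≠ B := fun h => hxB (h ▸ hxC)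
    refine ⟨C, ⟨Finset.mem_erase.mpr ⟨hne, hC⟩, hxC⟩, ?_⟩
    rintro D ⟨hD, hxD⟩
    exact hun D ⟨Finset.mem_of_mem_erase hD, hxD⟩

/-- The unique block of `P` containing `a`. -/
noncomputable def blockOf {I : Finset ι} {P : Finset (Finset ι)} (hP : IsPartitionOf I P)
    {a : ι} (ha : a ∈ I) : Finset ι :=
  Finset.choose (fun B => a ∈ B) P (hP.2.2 a ha)

lemma blockOf_mem {I : Finset ι} {P : Finset (Finset ι)} (hP : IsPartitionOf I P)
    {a : ι} (ha : a ∈ I) : blockOf hP ha ∈ P :=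
  (Finset.choose_spec _ _ _).1

lemma mem_blockOf {I : Finset ι} {P : Finset (Finset ι)} (hP : IsPartitionOf I P)
    {a : ι} (ha : a ∈ I) : a ∈ blockOf hP ha :=
  (Finset.choose_spec (fun B => a ∈ B) P (hP.2.2 a ha)).2

lemma blockOf_unique {I : Finset ι} {P : Finset (Finset ι)} (hP : IsPartitionOf I P)
    {a : ι} (ha : a ∈ I) {B : Finset ι} (hB : B ∈ P) (haB : a ∈ B) : B = blockOf hP ha := by
  obtain ⟨C, -, hun⟩ := hP.2.2 a ha
  exact (hun B ⟨hB, haB⟩).trans (hun _ ⟨blockOf_mem hP ha, mem_blockOf hP ha⟩).symm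

/-- Decomposition of a sum over partitions of `I` according to the block containing `a`. -/
lemma sum_partitionsOf_decomp {M : Type*} [AddCommMonoid M] (I : Finset ι) {a : ι}
    (ha : a ∈ I) (f : Finset (Finset ι) → M) :
    ∑ P ∈ partitionsOf I, f P
      = ∑ B ∈ I.powerset.filter (fun B => a ∈ B),
          ∑ Q ∈ partitionsOf (I \ B), f (insert B Q) := by
  classical
  rw [Finset.sum_sigma' (I.powerset.filter (fun B => a ∈ B)) (fun B => partitionsOf (I \ B))
    (fun B Q => f (insert B Q))]
  refine Finset.sum_bij'
    (fun P hP => ⟨blockOf (mem_partitionsOf.mp hP) ha,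
      P.erase (blockOf (mem_partitionsOf.mp hP) ha)⟩)
    (fun x _ => insert x.1 x.2) ?_ ?_ ?_ ?_ ?_
  · intro P hP
    have h := mem_partitionsOf.mp hP
    refine Finset.mem_sigma.mpr ⟨?_, ?_⟩
    · refine Finset.mem_filter.mpr ⟨Finset.mem_powerset.mpr (h.2.1 _ (blockOf_mem h ha)), ?_⟩
      exact mem_blockOf h ha
    · exact mem_partitionsOf.mpr (erase_isPartition h (blockOf_mem h ha))
  · rintro ⟨B, Q⟩ hx
    obtain ⟨hB, hQ⟩ := Finset.mem_sigma.mp hx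
    obtain ⟨hBI, haB⟩ := Finset.mem_filter.mp hB
    exact mem_partitionsOf.mpr
      (insert_isPartition haB (Finset.mem_powerset.mp hBI) (mem_partitionsOf.mp hQ))
  · intro P hP
    exact Finset.insert_erase (blockOf_mem (mem_partitionsOf.mp hP) ha)
  · rintro ⟨B, Q⟩ hx
    obtain ⟨hB, hQ⟩ := Finset.mem_sigma.mp hx
    obtain ⟨hBI, haB⟩ := Finset.mem_filter.mp hB
    have hQ' := mem_partitionsOf.mp hQ
    have hins : IsPartitionOf I (insert B Q) :=
      insert_isPartition haB (Finset.mem_powerset.mp hBI) hQ'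
    have h1 : blockOf (mem_partitionsOf.mp (mem_partitionsOf.mpr hins)) ha = B :=
      (blockOf_unique _ ha (Finset.mem_insert_self _ _) haB).symm
    have hBQ : B ∉ Q := block_not_mem haB hQ'
    have h2 : (insert B Q).erase B = Q := Finset.erase_insert hBQ
    have h3 : (insert B Q).erase
        (blockOf (mem_partitionsOf.mp (mem_partitionsOf.mpr hins)) ha) = Q := by
      rw [h1]; exact h2
    exact Sigma.ext h1 (heq_of_eq h3)
  · intro P hP
    rw [Finset.insert_erase (blockOf_mem (mem_partitionsOf.mp hP) ha)]

lemma partitionsOf_empty : partitionsOf (∅ : Finset ι) = {∅} := by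
  ext P
  rw [mem_partitionsOf, Finset.mem_singleton]
  constructor
  · intro h
    by_contra hne
    obtain ⟨B, hB⟩ := Finset.nonempty_iff_ne_empty.mpr hne
    have hBe : B = ∅ := Finset.subset_empty.mp (h.2.1 B hB)
    exact h.1 (hBe ▸ hB)
  · rintro rfl
    exact ⟨Finset.notMem_empty _, by simp, by simp⟩

lemma card_pos_of_mem_partitionsOf {I : Finset ι} (hI : I.Nonempty)
    {P : Finset (Finset ι)} (hP : IsPartitionOf I P) : 0 < P.card := by
  obtain ⟨a, ha⟩ := hI
  exact Finset.card_pos.mpr ⟨blockOf hP ha, blockOf_mem hP ha⟩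

lemma sum_falling : ∀ (n : ℕ) (I : Finset ι), I.card = n → ∀ y : ℂ,
    ∑ P ∈ partitionsOf I, ∏ i ∈ Finset.range P.card, (y - (i : ℂ)) = y ^ n := by
  intro n
  induction n using Nat.strong_induction_on with
  | _ n ih =>
    intro I hI y
    rcases Finset.eq_empty_or_nonempty I with rfl | ⟨a, ha⟩
    · simp at hI
      subst hI
      simp [partitionsOf_empty]
    · rw [sum_partitionsOf_decomp I ha]
      have hstep : ∀ B ∈ I.powerset.filter (fun B => a ∈ B),
          ∑ Q ∈ partitionsOf (I \ B), ∏ i ∈ Finset.range ((insert B Q).card), (y - (i : ℂ))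
            = y * (y - 1) ^ (I \ B).card := by
        intro B hB
        obtain ⟨hBI, haB⟩ := Finset.mem_filter.mp hB
        rw [Finset.mem_powerset] at hBI
        have hlt : (I \ B).card < n := by
          rw [← hI]
          apply Finset.card_lt_card
          exact Finset.sdiff_ssubset hBI ⟨a, haB⟩
        have hsum : ∑ Q ∈ partitionsOf (I \ B),
            ∏ i ∈ Finset.range (Q.card), ((y - 1) - (i : ℂ)) = (y - 1) ^ (I \ B).card :=
          ih _ hlt _ rfl _
        calc ∑ Q ∈ partitionsOf (I \ B),
              ∏ i ∈ Finset.range ((insert B Q).card), (y - (i : ℂ))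
            = ∑ Q ∈ partitionsOf (I \ B),
              y * ∏ i ∈ Finset.range (Q.card), ((y - 1) - (i : ℂ)) := by
              apply Finset.sum_congr rfl
              intro Q hQ
              have hBQ : B ∉ Q := block_not_mem haB (mem_partitionsOf.mp hQ)
              rw [Finset.card_insert_of_notMem hBQ, Finset.prod_range_succ']
              simp only [Nat.cast_zero, sub_zero, Nat.cast_add, Nat.cast_one]
              rw [mul_comm]
              congr 1
              apply Finset.prod_congr rfl
              intro i _
              ring
          _ = y * (y - 1) ^ (I \ B).card := by
              rw [← Finset.mul_sum, hsum]
      rw [Finset.sum_congr rfl hstep]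
      -- now ∑ B ∈ filter, y * (y-1)^(I\B).card = y^n
      have hbij : ∑ B ∈ I.powerset.filter (fun B => a ∈ B), y * (y - 1) ^ (I \ B).card
          = ∑ C ∈ (I.erase a).powerset, y * (y - 1) ^ ((I.erase a) \ C).card := by
        refine Finset.sum_bij' (fun B _ => B.erase a) (fun C _ => insert a C) ?_ ?_ ?_ ?_ ?_
        · intro B hB
          obtain ⟨hBI, haB⟩ := Finset.mem_filter.mp hB
          rw [Finset.mem_powerset] at hBI ⊢
          exact Finset.erase_subset_erase a hBI
        · intro C hC
          rw [Finset.mem_powerset] at hC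
          refine Finset.mem_filter.mpr ⟨Finset.mem_powerset.mpr ?_, Finset.mem_insert_self _ _⟩
          exact Finset.insert_subset ha (hC.trans (Finset.erase_subset a I))
        · intro B hB
          exact Finset.insert_erase (Finset.mem_filter.mp hB).2
        · intro C hC
          rw [Finset.mem_powerset] at hC
          exact Finset.erase_insert (fun h => (Finset.mem_erase.mp (hC h)).1 rfl)
        · intro B hB
          obtain ⟨hBI, haB⟩ := Finset.mem_filter.mp hB
          have hset : I \ B = (I.erase a) \ (B.erase a) := by
            ext x
            simp only [Finset.mem_sdiff, Finset.mem_erase]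
            constructor
            · intro ⟨hxI, hxB⟩
              exact ⟨⟨fun h => hxB (h ▸ haB), hxI⟩, fun h => hxB h.2⟩
            · intro ⟨⟨hxa, hxI⟩, hx⟩
              exact ⟨hxI, fun h => hx ⟨hxa, h⟩⟩
          rw [hset]
      rw [hbij, ← Finset.mul_sum]
      have hpow : ∑ C ∈ (I.erase a).powerset, (y - 1) ^ ((I.erase a) \ C).card
          = y ^ (I.erase a).card := by
        have := Finset.prod_add (fun _ : ι => (1 : ℂ)) (fun _ => y - 1) (I.erase a)
        simp only [Finset.prod_const_one, one_mul, Finset.prod_const] at this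
        rw [← this]
        congr 1
        ring
      have hn : 1 ≤ n := hI ▸ Finset.card_pos.mpr ⟨a, ha⟩
      rw [hpow, Finset.card_erase_of_mem ha, hI, ← pow_succ']
      congr 1
      omega

open Polynomial in
lemma sum_falling_poly (I : Finset ι) :
    ∑ P ∈ partitionsOf I, ∏ i ∈ Finset.range P.card, (X - C (i : ℂ)) = X ^ I.card := by
  apply Polynomial.funext
  intro y
  rw [Polynomial.eval_finset_sum]
  simp only [Polynomial.eval_prod, Polynomial.eval_sub, Polynomial.eval_X, Polynomial.eval_C,
    Polynomial.eval_pow]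
  exact sum_falling I.card I rfl y

lemma derivative_finset_prod (s : Finset ℕ) (f : ℕ → Polynomial ℂ) :
    Polynomial.derivative (∏ i ∈ s, f i)
      = ∑ i ∈ s, (∏ j ∈ s.erase i, f j) * Polynomial.derivative (f i) := by
  rw [Finset.prod_eq_multiset_prod, Polynomial.derivative_prod,
    Finset.sum_eq_multiset_sum]
  apply congrArg Multiset.sum
  apply Multiset.map_congr rfl
  intro i _
  rw [Finset.prod_eq_multiset_prod, Finset.erase_val]

open Polynomial in
lemma eval_deriv_falling (k : ℕ) (hk : 1 ≤ k) :
    Polynomial.eval 0 (Polynomial.derivative (∏ i ∈ Finset.range k, (X - C (i : ℂ))))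
      = (-1 : ℂ) ^ (k - 1) * ((k - 1).factorial : ℂ) := by
  classical
  rw [derivative_finset_prod]
  rw [Polynomial.eval_finset_sum]
  have h0 : (0 : ℕ) ∈ Finset.range k := Finset.mem_range.mpr hk
  rw [Finset.sum_eq_single_of_mem 0 h0]
  · simp only [Polynomial.derivative_sub, Polynomial.derivative_X, Polynomial.derivative_C,
      sub_zero, mul_one, Polynomial.eval_mul, Polynomial.eval_one, Polynomial.eval_prod,
      Polynomial.eval_sub, Polynomial.eval_X, Polynomial.eval_C]
    obtain ⟨m, rfl⟩ := Nat.exists_eq_add_of_le hk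
    have him : (Finset.range (1 + m)).erase 0 = Finset.image (· + 1) (Finset.range m) := by
      ext i
      simp only [Finset.mem_erase, Finset.mem_range, Finset.mem_image]
      constructor
      · intro ⟨hne, hlt⟩
        obtain ⟨j, rfl⟩ := Nat.exists_eq_add_of_lt (Nat.pos_of_ne_zero hne)
        exact ⟨j, by omega, by omega⟩
      · rintro ⟨j, hj, rfl⟩
        omega
    rw [him, Finset.prod_image (by intro x _ y _ h; exact Nat.add_right_cancel h)]
    have : ∀ j ∈ Finset.range m, (0 : ℂ) - ((j + 1 : ℕ) : ℂ) = (-1) * ((j : ℂ) + 1) := by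
      intro j _
      push_cast
      ring
    rw [Finset.prod_congr rfl this, Finset.prod_mul_distrib, Finset.prod_const]
    have hfac : ∏ j ∈ Finset.range m, ((j : ℂ) + 1) = (m.factorial : ℂ) := by
      exact_mod_cast Finset.prod_range_add_one_eq_factorial m
    rw [hfac, Finset.card_range]
    have hm : 1 + m - 1 = m := by omega
    rw [hm]
  · intro j hj hne
    rw [Polynomial.eval_mul, Polynomial.eval_prod]
    have h0e : (0 : ℕ) ∈ (Finset.range k).erase j := Finset.mem_erase.mpr ⟨Ne.symm hne, h0⟩
    rw [Finset.prod_eq_zero h0e (by simp), zero_mul]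

lemma key_sum (I : Finset ι) (hI : 2 ≤ I.card) :
    ∑ P ∈ partitionsOf I, (-1 : ℂ) ^ (P.card - 1) * ((P.card - 1).factorial : ℂ) = 0 := by
  classical
  have hne : I.Nonempty := Finset.card_pos.mp (by omega)
  have h := congrArg (fun p => Polynomial.eval 0 (Polynomial.derivative p)) (sum_falling_poly I)
  rw [Polynomial.derivative_X_pow, map_sum, Polynomial.eval_finset_sum] at h
  rw [Polynomial.eval_mul, Polynomial.eval_pow, Polynomial.eval_X, Polynomial.eval_C] at h
  rw [zero_pow (by omega), mul_zero] at h
  rw [← h]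
  apply Finset.sum_congr rfl
  intro P hP
  exact (eval_deriv_falling P.card
    (card_pos_of_mem_partitionsOf hne (mem_partitionsOf.mp hP))).symm

end Aux

/-- for `s : ℕ → ℂ` with `s 0 = 1`, we have `s n = s 1 ^ n` for all `n` iff
`χ(λ,s) = 0` for every tuple `λ` of positive integers of length at least `2`. -/
theorem stmt1 (s : ℕ → ℂ) (hs0 : s 0 = 1) :
    (∀ n : ℕ, s n = s 1 ^ n) ↔
      ∀ ℓ : ℕ, 2 ≤ ℓ → ∀ lam : Fin ℓ → ℕ, (∀ i, 0 < lam i) →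
        chiFam (Finset.univ : Finset (Fin ℓ)) lam s = 0 := by
  constructor
  · intro hn ℓ hℓ lam hpos
    unfold chiFam
    have hcard : (Finset.univ : Finset (Fin ℓ)).card = ℓ := by simp
    have hprod : ∀ P ∈ partitionsOf (Finset.univ : Finset (Fin ℓ)),
        (∏ B ∈ P, s (∑ i ∈ B, lam i)) = (s 1) ^ (∑ i, lam i) := by
      intro P hP
      have hpart := mem_partitionsOf.mp hP
      calc ∏ B ∈ P, s (∑ i ∈ B, lam i)
          = ∏ B ∈ P, (s 1) ^ (∑ i ∈ B, lam i) :=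
            Finset.prod_congr rfl fun B _ => hn _
        _ = (s 1) ^ (∑ B ∈ P, ∑ i ∈ B, lam i) := Finset.prod_pow_eq_pow_sum _ _ _
        _ = (s 1) ^ (∑ i, lam i) := by
            congr 1
            rw [← hpart.biUnion_eq]
            exact (Finset.sum_biUnion
              (fun B hB C hC hne => hpart.disj hB hC hne)).symm
    calc ∑ P ∈ partitionsOf (Finset.univ : Finset (Fin ℓ)),
          (-1 : ℂ) ^ (P.card - 1) * ((P.card - 1).factorial : ℂ) * ∏ B ∈ P, s (∑ i ∈ B, lam i)
        = ∑ P ∈ partitionsOf (Finset.univ : Finset (Fin ℓ)),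
          (-1 : ℂ) ^ (P.card - 1) * ((P.card - 1).factorial : ℂ) * (s 1) ^ (∑ i, lam i) := by
          exact Finset.sum_congr rfl fun P hP => by rw [hprod P hP]
      _ = (∑ P ∈ partitionsOf (Finset.univ : Finset (Fin ℓ)),
          (-1 : ℂ) ^ (P.card - 1) * ((P.card - 1).factorial : ℂ)) * (s 1) ^ (∑ i, lam i) := by
          rw [Finset.sum_mul]
      _ = 0 := by
          rw [key_sum _ (by rw [hcard]; exact hℓ), zero_mul]
  · intro hχ n
    induction n using Nat.strong_induction_on with
    | _ n ih =>
      rcases n with _ | _ | m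
      · simpa using hs0
      · simp
      · -- n = m + 2
        have h := hχ (m + 2) (by omega) (fun _ => 1) (fun _ => one_pos)
        unfold chiFam at h
        have hcard : (Finset.univ : Finset (Fin (m + 2))).card = m + 2 := by simp
        have h' : ∑ P ∈ partitionsOf (Finset.univ : Finset (Fin (m + 2))),
            (-1 : ℂ) ^ (P.card - 1) * ((P.card - 1).factorial : ℂ) * ∏ B ∈ P, s B.card = 0 := by
          rw [← h]
          apply Finset.sum_congr rfl
          intro P _
          congr 1
          apply Finset.prod_congr rfl
          intro B _
          congr 1
          simp
        have htop : ({Finset.univ} : Finset (Finset (Fin (m + 2)))) ∈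
            partitionsOf (Finset.univ : Finset (Fin (m + 2))) := by
          refine mem_partitionsOf.mpr ⟨?_, by simp, ?_⟩
          · rw [Finset.mem_singleton]
            intro hemp
            have : (Finset.univ : Finset (Fin (m + 2))).Nonempty := Finset.univ_nonempty
            rw [← hemp] at this
            exact Finset.not_nonempty_empty this
          · intro a _
            refine ⟨Finset.univ, ⟨Finset.mem_singleton_self _, Finset.mem_univ a⟩, ?_⟩
            rintro B ⟨hB, -⟩
            exact Finset.mem_singleton.mp hB
        rw [← Finset.add_sum_erase _ _ htop] at h'
        have htopval : (-1 : ℂ) ^ (({Finset.univ} : Finset (Finset (Fin (m + 2)))).card - 1) *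
            ((({Finset.univ} : Finset (Finset (Fin (m + 2)))).card - 1).factorial : ℂ) *
            ∏ B ∈ ({Finset.univ} : Finset (Finset (Fin (m + 2)))), s B.card = s (m + 2) := by
          simp
        rw [htopval] at h'
        have hrest : ∀ P ∈ (partitionsOf (Finset.univ : Finset (Fin (m + 2)))).erase
            {Finset.univ},
            (-1 : ℂ) ^ (P.card - 1) * ((P.card - 1).factorial : ℂ) * ∏ B ∈ P, s B.card
              = (-1 : ℂ) ^ (P.card - 1) * ((P.card - 1).factorial : ℂ) * (s 1) ^ (m + 2) := by
          intro P hP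
          have hPmem := Finset.mem_of_mem_erase hP
          have hPne : P ≠ {Finset.univ} := Finset.ne_of_mem_erase hP
          have hpart := mem_partitionsOf.mp hPmem
          have hblock : ∀ B ∈ P, B.card < m + 2 := by
            intro B hB
            rcases lt_or_eq_of_le (by simpa using Finset.card_le_univ B) with hlt | heq
            · simpa using hlt
            · exfalso
              have hBuniv : B = Finset.univ := Finset.eq_univ_of_card B (by simpa using heq)
              apply hPne
              apply Finset.eq_singleton_iff_unique_mem.mpr
              refine ⟨hBuniv ▸ hB, ?_⟩
              intro C hC
              have hCne : C.Nonempty := Finset.nonempty_iff_ne_empty.mpr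
                (fun hemp => hpart.1 (hemp ▸ hC))
              obtain ⟨x, hx⟩ := hCne
              obtain ⟨D, -, hun⟩ := hpart.2.2 x (Finset.mem_univ x)
              rw [hun C ⟨hC, hx⟩, ← hun Finset.univ ⟨hBuniv ▸ hB, Finset.mem_univ x⟩]
          congr 1
          calc ∏ B ∈ P, s B.card = ∏ B ∈ P, (s 1) ^ B.card :=
                Finset.prod_congr rfl fun B hB => ih B.card (hblock B hB)
            _ = (s 1) ^ (∑ B ∈ P, B.card) := Finset.prod_pow_eq_pow_sum _ _ _
            _ = (s 1) ^ (m + 2) := by rw [hpart.sum_card, hcard]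
        rw [Finset.sum_congr rfl hrest, ← Finset.sum_mul] at h'
        have hsum : ∑ P ∈ (partitionsOf (Finset.univ : Finset (Fin (m + 2)))).erase
            {Finset.univ},
            (-1 : ℂ) ^ (P.card - 1) * ((P.card - 1).factorial : ℂ) = -1 := by
          have hk := key_sum (Finset.univ : Finset (Fin (m + 2))) (by omega)
          rw [← Finset.add_sum_erase _ _ htop] at hk
          have : (-1 : ℂ) ^ (({Finset.univ} : Finset (Finset (Fin (m + 2)))).card - 1) *
              ((({Finset.univ} : Finset (Finset (Fin (m + 2)))).card - 1).factorial : ℂ)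
                = 1 := by simp
          rw [this] at hk
          linear_combination hk
        rw [hsum] at h'
        linear_combination h'
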